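/- Let q be a prime power and let n_1 and n_2 be odd positive integers coprime to q. If all monic irreducible factors of x^{n_1} − 1 over F_{q^2} are SCRIM and all monic irreducible factors of x^{n_2} − 1 over F_{q^2} are SCRIM, then all monic irreducible factors of x^{n_1 n_2} − 1 over F_{q^2} are SCRIM. -/

import Mathlib

open Polynomial

/-- The reciprocal polynomial `f*(x) = x^(deg f) * f(0)⁻¹ * f(1/x)`. -/
noncomputable def crecip {F : Type*} [Field F] (f : F[X]) : F[X] :=
  C (f.coeff 0)⁻¹ * f.reverse

/-- The conjugate-reciprocal polynomial `f†`, obtained by applying the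
conjugation `a ↦ a ^ q` to each coefficient of `f*`. -/
noncomputable def cdagger {F : Type*} [Field F] (q : ℕ) (f : F[X]) : F[X] :=
  (crecip f).sum fun i a => C (a ^ q) * X ^ i

/-- A polynomial is SCRIM if it is monic, irreducible, and self-conjugate-reciprocal. -/
def IsSCRIM {F : Type*} [Field F] (q : ℕ) (f : F[X]) : Prop :=
  f.Monic ∧ Irreducible f ∧ f = cdagger q f

/-- The set `Ω_{q²,n}` of SCRIM factors of `x^n - 1` over `F = F_{q²}`. -/
def scrimFactors (F : Type*) [Field F] (q n : ℕ) : Set F[X] :=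
  {f | IsSCRIM q f ∧ f ∣ X ^ n - 1}

section PolyHelpers

variable {F : Type*} [Field F] {K : Type*} [Field K] [Algebra F K]

lemma cdagger_eq_map (q : ℕ) (φ : F →+* F) (hφ : ∀ a, φ a = a ^ q) (f : F[X]) :
    cdagger q f = (crecip f).map φ := by
  rw [show (crecip f).map φ = eval₂ (C.comp φ) X (crecip f) from rfl, eval₂_eq_sum]
  unfold cdagger Polynomial.sum
  exact Finset.sum_congr rfl fun i _ => by simp [hφ]

lemma crecip_monic {f : F[X]} (hf : f.Monic) (h0 : f.coeff 0 ≠ 0) :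
    (crecip f).Monic ∧ (crecip f).natDegree = f.natDegree := by
  have ht : f.natTrailingDegree = 0 := natTrailingDegree_eq_zero.mpr (Or.inr h0)
  have htc : f.trailingCoeff = f.coeff 0 := by rw [trailingCoeff, ht]
  constructor
  · show (crecip f).leadingCoeff = 1
    unfold crecip
    rw [leadingCoeff_mul, leadingCoeff_C, reverse_leadingCoeff, htc, inv_mul_cancel₀ h0]
  · unfold crecip
    rw [natDegree_C_mul (inv_ne_zero h0), reverse_natDegree, ht, Nat.sub_zero]

lemma cdagger_monic (q : ℕ) (φ : F →+* F) (hφ : ∀ a, φ a = a ^ q) {f : F[X]}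
    (hf : f.Monic) (h0 : f.coeff 0 ≠ 0) :
    (cdagger q f).Monic ∧ (cdagger q f).natDegree = f.natDegree := by
  rw [cdagger_eq_map q φ hφ]
  obtain ⟨h1, h2⟩ := crecip_monic hf h0
  exact ⟨h1.map φ, by rw [natDegree_map, h2]⟩

lemma monic_eq_of_dvd {f g : F[X]} (hf : f.Monic) (hg : g.Monic) (hd : f ∣ g)
    (hdeg : g.natDegree ≤ f.natDegree) : f = g := by
  obtain ⟨c, rfl⟩ := hd
  have hc0 : c ≠ 0 := by rintro rfl; exact hg.ne_zero (mul_zero f)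
  have hdeg2 : (f * c).natDegree = f.natDegree + c.natDegree :=
    natDegree_mul hf.ne_zero hc0
  have hcd : c.natDegree = 0 := by omega
  have hc : c = C (c.coeff 0) := eq_C_of_natDegree_eq_zero hcd
  have ha : c.coeff 0 = 1 := by
    have := hg
    rw [hc] at this
    have h2 : (f * C (c.coeff 0)).leadingCoeff = 1 := this
    rwa [leadingCoeff_mul, hf.leadingCoeff, one_mul, leadingCoeff_C] at h2
  rw [hc, ha, map_one, mul_one]

lemma dagger_eval (q : ℕ) (hq0 : q ≠ 0) (φ : F →+* F) (hφ : ∀ a, φ a = a ^ q)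
    (ψ : K →+* K) (hψ : ∀ x : K, ψ x = x ^ q)
    (f : F[X]) {γ : K} (hγ : γ ≠ 0) (hroot : aeval γ f = 0) :
    aeval ((γ ^ q)⁻¹) (cdagger q f) = 0 := by
  have hx : γ ^ q ≠ 0 := pow_ne_zero _ hγ
  letI : Invertible (γ ^ q) := invertibleOfNonzero hx
  have hcomp : ((algebraMap F K).comp φ) = ψ.comp (algebraMap F K) := by
    ext a
    simp only [RingHom.coe_comp, Function.comp_apply, hφ, hψ, map_pow]
  have e1 : cdagger q f = C (φ (f.coeff 0)⁻¹) * (f.reverse.map φ) := by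
    rw [cdagger_eq_map q φ hφ, crecip, Polynomial.map_mul, map_C]
  have h3 : eval₂ ((algebraMap F K).comp φ) (γ ^ q) f = 0 := by
    rw [hcomp, ← hψ γ, ← hom_eval₂, ← aeval_def, hroot, map_zero]
  have e2 : aeval ((γ ^ q)⁻¹) (f.reverse.map φ) * (γ ^ q) ^ f.natDegree = 0 := by
    rw [aeval_def, eval₂_map, ← invOf_eq_inv (γ ^ q), eval₂_reverse_mul_pow]
    exact h3
  have e3 : aeval ((γ ^ q)⁻¹) (f.reverse.map φ) = 0 := by
    rcases mul_eq_zero.mp e2 with h | h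
    · exact h
    · exact absurd h (pow_ne_zero _ hx)
  rw [e1, map_mul, aeval_C, e3, mul_zero]

lemma aeval_pow_fixed (c : ℕ) (ψ : K →+* K) (hψ : ∀ x : K, ψ x = x ^ c)
    (hfix : ∀ a : F, a ^ c = a) (f : F[X]) (γ : K) :
    aeval (γ ^ c) f = (aeval γ f) ^ c := by
  have hcomp : ψ.comp (algebraMap F K) = algebraMap F K := by
    ext a
    simp only [RingHom.coe_comp, Function.comp_apply, hψ, ← map_pow, hfix]
  have h := hom_eval₂ f (algebraMap F K) ψ γ
  rw [hcomp, hψ, hψ] at h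
  rw [aeval_def, aeval_def, ← h]

lemma aeval_pow_fixed_iter (c : ℕ) (hc0 : c ≠ 0) (ψ : K →+* K) (hψ : ∀ x : K, ψ x = x ^ c)
    (hfix : ∀ a : F, a ^ c = a) (f : F[X]) (γ : K) (hroot : aeval γ f = 0) (w : ℕ) :
    aeval (γ ^ (c ^ w)) f = 0 := by
  induction w with
  | zero => simpa using hroot
  | succ w ih =>
    rw [pow_succ, pow_mul, aeval_pow_fixed c ψ hψ hfix, ih, zero_pow hc0]

end PolyHelpers

section NT

lemma int_lift {p : ℕ} (hp : p.Prime) {x : ℤ} (h : (p : ℤ) ∣ x - 1) (j : ℕ) :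
    (p : ℤ) ^ (j + 1) ∣ x ^ (p ^ j) - 1 := by
  induction j with
  | zero => simpa using h
  | succ j ih =>
    set y : ℤ := x ^ (p ^ j) with hy
    have hy1 : (p : ℤ) ∣ y - 1 := (dvd_pow_self (p:ℤ) (Nat.succ_ne_zero j)).trans ih
    have hgeom : (p : ℤ) ∣ ∑ i ∈ Finset.range p, y ^ i := by
      have h1 : (∑ i ∈ Finset.range p, y ^ i) - p = ∑ i ∈ Finset.range p, (y ^ i - 1) := by
        rw [Finset.sum_sub_distrib]
        simp [Finset.card_range]
      have h2 : (p : ℤ) ∣ ∑ i ∈ Finset.range p, (y ^ i - 1) :=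
        Finset.dvd_sum fun i _ => hy1.trans (by simpa using sub_dvd_pow_sub_pow y 1 i)
      have h3 : (p : ℤ) ∣ (∑ i ∈ Finset.range p, y ^ i) - p := h1 ▸ h2
      have := dvd_add h3 (dvd_refl (p : ℤ))
      simpa using this
    have key : y ^ p - 1 = (∑ i ∈ Finset.range p, y ^ i) * (y - 1) := (geom_sum_mul y p).symm
    have hm : (p : ℤ) * (p : ℤ) ^ (j + 1) ∣ (∑ i ∈ Finset.range p, y ^ i) * (y - 1) :=
      mul_dvd_mul hgeom ih
    rw [← key] at hm
    have hexp : x ^ (p ^ (j + 1)) = y ^ p := by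
      rw [hy, ← pow_mul, pow_succ]
    rw [hexp]
    calc (p:ℤ) ^ (j + 2) = (p : ℤ) * (p : ℤ) ^ (j + 1) := by ring
    _ ∣ y ^ p - 1 := hm

lemma sq_eq_one_zmod {p k : ℕ} (hp : Nat.Prime p) (hp2 : p ≠ 2) (hk : k ≠ 0)
    (x : ZMod (p ^ k)) (hx : x ^ 2 = 1) : x = 1 ∨ x = -1 := by
  haveI : NeZero (p ^ k) := ⟨pow_ne_zero _ hp.pos.ne'⟩
  set v : ℤ := (x.val : ℤ) with hv
  have hvx : ((v : ℤ) : ZMod (p ^ k)) = x := by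
    rw [hv]
    push_cast
    simp [ZMod.natCast_val, ZMod.cast_id]
  have hdvd : ((p : ℤ)) ^ k ∣ (v - 1) * (v + 1) := by
    have h1 : ((v ^ 2 - 1 : ℤ) : ZMod (p ^ k)) = 0 := by
      push_cast [hvx]
      rw [hx]
      ring
    have h2 := (ZMod.intCast_zmod_eq_zero_iff_dvd _ _).mp h1
    push_cast at h2
    have h3 : (v - 1) * (v + 1) = v ^ 2 - 1 := by ring
    rw [h3]
    exact h2
  have hip : Prime ((p : ℤ)) := Nat.prime_iff_prime_int.mp hp
  have hnot2 : ¬ ((p : ℤ) ∣ (v - 1) ∧ (p : ℤ) ∣ (v + 1)) := by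
    rintro ⟨h1, h2⟩
    have hd2 : (p : ℤ) ∣ 2 := by
      have := dvd_sub h2 h1
      simpa using this
    have hd2' : p ∣ 2 := by exact_mod_cast hd2
    exact hp2 ((Nat.prime_dvd_prime_iff_eq hp Nat.prime_two).mp hd2')
  by_cases hc : (p : ℤ) ∣ (v - 1)
  · have hnd : ¬ (p : ℤ) ∣ (v + 1) := fun h => hnot2 ⟨hc, h⟩
    have hco : IsCoprime ((p : ℤ) ^ k) (v + 1) := (hip.coprime_iff_not_dvd.mpr hnd).pow_left
    have hdl : ((p : ℤ)) ^ k ∣ (v - 1) := hco.dvd_of_dvd_mul_right hdvd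
    left
    have h1 : ((v - 1 : ℤ) : ZMod (p ^ k)) = 0 := by
      rw [ZMod.intCast_zmod_eq_zero_iff_dvd]
      push_cast
      exact hdl
    push_cast [hvx] at h1
    exact sub_eq_zero.mp h1
  · have hco : IsCoprime ((p : ℤ) ^ k) (v - 1) := (hip.coprime_iff_not_dvd.mpr hc).pow_left
    have hdl : ((p : ℤ)) ^ k ∣ (v + 1) := hco.dvd_of_dvd_mul_left hdvd
    right
    have h1 : ((v + 1 : ℤ) : ZMod (p ^ k)) = 0 := by
      rw [ZMod.intCast_zmod_eq_zero_iff_dvd]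
      push_cast
      exact hdl
    push_cast [hvx] at h1
    exact eq_neg_of_add_eq_zero_left h1

end NT

lemma lift_odd {p q k : ℕ} (hp : p.Prime) (hp2 : p ≠ 2) (hpq : ¬ p ∣ q)
    (h : ∃ j, Odd j ∧ p ∣ q ^ j + 1) (hk : k ≠ 0) :
    ∃ j, Odd j ∧ p ^ k ∣ q ^ j + 1 := by
  haveI := Fact.mk hp
  obtain ⟨j₀, hj₀odd, hj₀⟩ := h
  haveI : NeZero (p ^ k) := ⟨pow_ne_zero _ hp.pos.ne'⟩
  set a : ZMod p := (q : ZMod p) with hadef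
  have ha : a ^ j₀ = -1 := by
    have h1 : ((q ^ j₀ + 1 : ℕ) : ZMod p) = 0 := (ZMod.natCast_eq_zero_iff _ _).mpr hj₀
    push_cast at h1
    exact eq_neg_of_add_eq_zero_left h1
  have ha0 : a ≠ 0 := fun h => hpq ((ZMod.natCast_eq_zero_iff _ _).mp h)
  have hafin : IsOfFinOrder a := isOfFinOrder_iff_pow_eq_one.mpr
    ⟨p - 1, by have := hp.one_lt; omega, ZMod.pow_card_sub_one_eq_one ha0⟩
  set t₀ := orderOf a with ht₀def
  have ht₀pos : 0 < t₀ := hafin.orderOf_pos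
  have ht₀dvd : t₀ ∣ 2 * j₀ := by
    apply orderOf_dvd_of_pow_eq_one
    rw [mul_comm, pow_mul, ha]
    exact neg_one_sq
  have ht₀ndvd : ¬ t₀ ∣ j₀ := by
    intro hd
    have h1 : a ^ j₀ = 1 := orderOf_dvd_iff_pow_eq_one.mp hd
    rw [ha] at h1
    have h2 : ((2 : ℕ) : ZMod p) = 0 := by
      push_cast
      linear_combination -h1
    have h3 : p ∣ 2 := (ZMod.natCast_eq_zero_iff 2 p).mp h2
    exact hp2 ((Nat.prime_dvd_prime_iff_eq hp Nat.prime_two).mp h3)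
  have ht₀even : 2 ∣ t₀ := by
    by_contra hhh
    have hco : Nat.Coprime t₀ 2 := (Nat.coprime_comm.mp ((Nat.Prime.coprime_iff_not_dvd Nat.prime_two).mpr
      (fun hcc => hhh hcc)))
    exact ht₀ndvd (hco.dvd_of_dvd_mul_left ht₀dvd)
  obtain ⟨u₀, hu₀⟩ := ht₀even
  have hu₀j : u₀ ∣ j₀ := by
    have := hu₀ ▸ ht₀dvd
    exact (Nat.mul_dvd_mul_iff_left (by norm_num : 0 < 2)).mp this
  have hu₀odd : Odd u₀ := by
    rcases Nat.even_or_odd u₀ with he | ho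
    · exfalso
      have h2 : 2 ∣ j₀ := dvd_trans he.two_dvd hu₀j
      rw [Nat.odd_iff] at hj₀odd
      omega
    · exact ho
  -- ZMod (p^k)
  set b : ZMod (p ^ k) := (q : ZMod (p ^ k)) with hbdef
  have hcoq : Nat.Coprime q (p ^ k) :=
    (Nat.coprime_comm.mp ((hp.coprime_iff_not_dvd).mpr hpq)).pow_right k
  have hbfin : IsOfFinOrder b := by
    refine isOfFinOrder_iff_pow_eq_one.mpr ⟨Nat.totient (p ^ k), Nat.totient_pos.mpr (pow_pos hp.pos k), ?_⟩
    have heuler : q ^ Nat.totient (p ^ k) ≡ 1 [MOD p ^ k] := Nat.ModEq.pow_totient hcoq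
    have h2 : ((q ^ Nat.totient (p ^ k) : ℕ) : ZMod (p ^ k)) = ((1 : ℕ) : ZMod (p ^ k)) :=
      (ZMod.natCast_eq_natCast_iff _ _ _).mpr heuler
    push_cast at h2
    exact h2
  set t := orderOf b with htdef
  have htpos : 0 < t := hbfin.orderOf_pos
  have ht₀t : t₀ ∣ t := by
    apply orderOf_dvd_of_pow_eq_one
    have h1 : q ^ t ≡ 1 [MOD p ^ k] := by
      have hb1 : b ^ t = 1 := pow_orderOf_eq_one b
      have h2 : ((q ^ t : ℕ) : ZMod (p ^ k)) = ((1 : ℕ) : ZMod (p ^ k)) := by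
        push_cast
        exact hb1
      exact (ZMod.natCast_eq_natCast_iff _ _ _).mp h2
    have h3 : q ^ t ≡ 1 [MOD p] := Nat.ModEq.of_dvd (dvd_pow_self p hk) h1
    have h4 : ((q ^ t : ℕ) : ZMod p) = ((1 : ℕ) : ZMod p) :=
      (ZMod.natCast_eq_natCast_iff _ _ _).mpr h3
    push_cast at h4
    exact h4
  have htdvd : t ∣ t₀ * p ^ (k - 1) := by
    apply orderOf_dvd_of_pow_eq_one
    have h1 : q ^ t₀ ≡ 1 [MOD p] := by
      have ha1 : a ^ t₀ = 1 := pow_orderOf_eq_one a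
      have h2 : ((q ^ t₀ : ℕ) : ZMod p) = ((1 : ℕ) : ZMod p) := by
        push_cast
        exact ha1
      exact (ZMod.natCast_eq_natCast_iff _ _ _).mp h2
    have h2 : (p : ℤ) ∣ (q : ℤ) ^ t₀ - 1 := by
      have h3 := (Nat.modEq_iff_dvd).mp h1
      push_cast at h3
      rw [dvd_sub_comm] at h3
      exact h3
    have h3 : ((p : ℤ)) ^ ((k - 1) + 1) ∣ ((q : ℤ) ^ t₀) ^ (p ^ (k - 1)) - 1 := int_lift hp h2 (k - 1)
    rw [show (k - 1) + 1 = k by omega, ← pow_mul] at h3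
    have h4 : q ^ (t₀ * p ^ (k - 1)) ≡ 1 [MOD p ^ k] := by
      rw [Nat.modEq_iff_dvd]
      push_cast
      rw [dvd_sub_comm]
      exact h3
    have h5 : ((q ^ (t₀ * p ^ (k - 1)) : ℕ) : ZMod (p ^ k)) = ((1 : ℕ) : ZMod (p ^ k)) :=
      (ZMod.natCast_eq_natCast_iff _ _ _).mpr h4
    push_cast at h5
    exact h5
  obtain ⟨sfac, hsfac⟩ := ht₀t
  have hsfdvd : sfac ∣ p ^ (k - 1) := by
    have h1 : t₀ * sfac ∣ t₀ * p ^ (k - 1) := hsfac ▸ htdvd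
    exact (Nat.mul_dvd_mul_iff_left ht₀pos).mp h1
  have hsfodd : Odd sfac := by
    obtain ⟨i, hi, rfl⟩ := (Nat.dvd_prime_pow hp).mp hsfdvd
    exact (hp.odd_of_ne_two hp2).pow
  set halfT := u₀ * sfac with hhalf
  have hhalfodd : Odd halfT := hu₀odd.mul hsfodd
  have ht2 : t = 2 * halfT := by rw [hhalf, hsfac, hu₀]; ring
  have hw2 : (b ^ halfT) ^ 2 = 1 := by
    rw [← pow_mul, mul_comm, ← ht2]
    exact pow_orderOf_eq_one b
  have hw1 : b ^ halfT ≠ 1 := by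
    intro h
    have h1 : t ∣ halfT := orderOf_dvd_of_pow_eq_one h
    have h2 : 0 < halfT := by rcases hhalfodd with ⟨c, hc⟩; omega
    have := Nat.le_of_dvd h2 h1
    omega
  rcases sq_eq_one_zmod hp hp2 hk (b ^ halfT) hw2 with h | h
  · exact absurd h hw1
  · refine ⟨halfT, hhalfodd, ?_⟩
    have h2 : ((q ^ halfT + 1 : ℕ) : ZMod (p ^ k)) = 0 := by
      push_cast
      rw [show ((q : ZMod (p ^ k))) ^ halfT = -1 from h]
      ring
    exact (ZMod.natCast_eq_zero_iff _ _).mp h2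


lemma odd_of_dvd' {d n : ℕ} (hd : d ∣ n) (hn : Odd n) : Odd d := by
  rw [Nat.odd_iff] at hn ⊢
  rcases Nat.even_or_odd d with he | ho
  · exfalso
    have : 2 ∣ n := dvd_trans he.two_dvd hd
    omega
  · exact Nat.odd_iff.mp ho

lemma nt_combine {q : ℕ} (hq2 : 2 ≤ q) (N : ℕ) (hodd : Odd N) (hco : N.Coprime q)
    (hpr : ∀ p : ℕ, p.Prime → p ∣ N → ∃ j, Odd j ∧ p ∣ q ^ j + 1) :
    ∃ j, Odd j ∧ N ∣ q ^ j + 1 := by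
  induction N using Nat.recOnPosPrimePosCoprime with
  | prime_pow p k hp hk =>
    have hpp : p.Prime := hp
    obtain ⟨j₀, hj₀, hdvd⟩ := hpr p hpp (dvd_pow_self p hk.ne')
    have hp2 : p ≠ 2 := by
      rintro rfl
      have h2 : (2 : ℕ) ∣ 2 ^ k := dvd_pow_self 2 hk.ne'
      rw [Nat.odd_iff] at hodd
      omega
    have hpq : ¬ p ∣ q := (hpp.coprime_iff_not_dvd).mp
      (Nat.Coprime.coprime_dvd_left (dvd_pow_self p hk.ne') hco)
    exact lift_odd hpp hp2 hpq ⟨j₀, hj₀, hdvd⟩ hk.ne'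
  | zero => exact absurd hodd (by simp)
  | one => exact ⟨1, odd_one, one_dvd _⟩
  | coprime a b ha hb hab iha ihb =>
    have hodda : Odd a := odd_of_dvd' (dvd_mul_right a b) hodd
    have hoddb : Odd b := odd_of_dvd' (dvd_mul_left b a) hodd
    obtain ⟨j₁, hj₁, hd₁⟩ := iha hodda (hco.coprime_dvd_left (dvd_mul_right a b))
      (fun p hp hpd => hpr p hp (hpd.trans (dvd_mul_right a b)))
    obtain ⟨j₂, hj₂, hd₂⟩ := ihb hoddb (hco.coprime_dvd_left (dvd_mul_left b a))
      (fun p hp hpd => hpr p hp (hpd.trans (dvd_mul_left b a)))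
    refine ⟨j₁ * j₂, hj₁.mul hj₂, Nat.Coprime.mul_dvd_of_dvd_of_dvd hab ?_ ?_⟩
    · haveI : NeZero a := ⟨by omega⟩
      have h1 : ((q ^ j₁ + 1 : ℕ) : ZMod a) = 0 := (ZMod.natCast_eq_zero_iff _ _).mpr hd₁
      push_cast at h1
      have h2 : ((q : ZMod a)) ^ (j₁ * j₂) + 1 = 0 := by
        rw [pow_mul, eq_neg_of_add_eq_zero_left h1, hj₂.neg_one_pow]
        ring
      have h3 : ((q ^ (j₁ * j₂) + 1 : ℕ) : ZMod a) = 0 := by push_cast; exact h2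
      exact (ZMod.natCast_eq_zero_iff _ _).mp h3
    · haveI : NeZero b := ⟨by omega⟩
      have h1 : ((q ^ j₂ + 1 : ℕ) : ZMod b) = 0 := (ZMod.natCast_eq_zero_iff _ _).mpr hd₂
      push_cast at h1
      have h2 : ((q : ZMod b)) ^ (j₁ * j₂) + 1 = 0 := by
        rw [mul_comm j₁ j₂, pow_mul, eq_neg_of_add_eq_zero_left h1, hj₁.neg_one_pow]
        ring
      have h3 : ((q ^ (j₁ * j₂) + 1 : ℕ) : ZMod b) = 0 := by push_cast; exact h2
      exact (ZMod.natCast_eq_zero_iff _ _).mp h3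

lemma scrim_build {q : ℕ} {F : Type*} [Field F] [Fintype F] (hF : Fintype.card F = q ^ 2)
    {p₀ s : ℕ} (hp₀ : Nat.Prime p₀) (hs : s ≠ 0) (hqs : q = p₀ ^ s) (hchar : CharP F p₀)
    {N : ℕ} (hN : N ≠ 0) {j : ℕ} (hj : Odd j) (hdvd : N ∣ q ^ j + 1)
    (f : F[X]) (hm : f.Monic) (hirr : Irreducible f) (hf : f ∣ X ^ N - 1) :
    f = cdagger q f := by
  haveI := Fact.mk hp₀
  haveI := hchar
  have hq0 : q ≠ 0 := by rw [hqs]; exact pow_ne_zero s hp₀.pos.ne'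
  have hc0 : f.coeff 0 ≠ 0 := by
    rw [coeff_zero_eq_eval_zero]
    intro h
    have hdvd0 : f.eval 0 ∣ (X ^ N - 1 : F[X]).eval 0 := eval_dvd hf
    rw [h] at hdvd0
    rw [zero_dvd_iff] at hdvd0
    simp [zero_pow hN] at hdvd0
  haveI hfirr : Fact (Irreducible f) := ⟨hirr⟩
  set K := AdjoinRoot f with hK
  haveI : CharP K p₀ := charP_of_injective_algebraMap (algebraMap F K).injective p₀
  set α := AdjoinRoot.root f with hα
  have hroot : aeval α f = 0 := by rw [AdjoinRoot.aeval_eq, AdjoinRoot.mk_self]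
  have hαN : α ^ N = 1 := by
    have h1 : aeval α ((X : F[X]) ^ N - 1) = 0 := by
      rw [AdjoinRoot.aeval_eq, AdjoinRoot.mk_eq_zero.mpr hf]
    rw [map_sub, map_pow, aeval_X, map_one, sub_eq_zero] at h1
    exact h1
  have hα0 : α ≠ 0 := by
    intro h
    rw [h, zero_pow hN] at hαN
    exact zero_ne_one hαN
  set φ : F →+* F := iterateFrobenius F p₀ s with hφdef
  have hφ : ∀ a : F, φ a = a ^ q := fun a => by rw [hφdef, iterateFrobenius_def, hqs]
  set ψ : K →+* K := iterateFrobenius K p₀ s with hψdef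
  have hψ : ∀ x : K, ψ x = x ^ q := fun x => by rw [hψdef, iterateFrobenius_def, hqs]
  set ψ₂ : K →+* K := iterateFrobenius K p₀ (2 * s) with hψ₂def
  have hψ₂ : ∀ x : K, ψ₂ x = x ^ (q ^ 2) := fun x => by
    rw [hψ₂def, iterateFrobenius_def, hqs, ← pow_mul, mul_comm s 2]
  have hfix2 : ∀ a : F, a ^ (q ^ 2) = a := fun a => by
    conv_rhs => rw [← FiniteField.pow_card a]
    rw [hF]
  obtain ⟨w, hw⟩ := hj
  set γ : K := α ^ ((q ^ 2) ^ w) with hγdef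
  have hγroot : aeval γ f = 0 :=
    aeval_pow_fixed_iter (q ^ 2) (pow_ne_zero 2 hq0) ψ₂ hψ₂ hfix2 f α hroot w
  have hγ0 : γ ≠ 0 := pow_ne_zero _ hα0
  have hkey : γ ^ q * α = 1 := by
    rw [hγdef, ← pow_mul]
    have he : (q ^ 2) ^ w * q = q ^ j := by
      rw [← pow_mul, ← pow_succ, hw]
    rw [he]
    obtain ⟨t, ht⟩ := hdvd
    calc α ^ (q ^ j) * α = α ^ (q ^ j + 1) := (pow_succ α _).symm
    _ = α ^ (N * t) := by rw [ht]
    _ = 1 := by rw [pow_mul, hαN, one_pow]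
  have hinv : (γ ^ q)⁻¹ = α := inv_eq_of_mul_eq_one_right hkey
  have hdag : aeval α (cdagger q f) = 0 := by
    rw [← hinv]
    exact dagger_eval q hq0 φ hφ ψ hψ f hγ0 hγroot
  have hdvd2 : f ∣ cdagger q f := by
    apply AdjoinRoot.mk_eq_zero.mp
    rw [← AdjoinRoot.aeval_eq]
    exact hdag
  obtain ⟨hmon2, hdeg2⟩ := cdagger_monic q φ hφ hm hc0
  exact monic_eq_of_dvd hm hmon2 hdvd2 (le_of_eq hdeg2)

lemma scrim_extract {q : ℕ} {F : Type*} [Field F] [Fintype F] (hF : Fintype.card F = q ^ 2)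
    {p₀ s : ℕ} (hp₀ : Nat.Prime p₀) (hs : s ≠ 0) (hqs : q = p₀ ^ s) (hchar : CharP F p₀)
    {n p : ℕ} (hall : ∀ f : F[X], f.Monic → Irreducible f → f ∣ X ^ n - 1 → IsSCRIM q f)
    (hn : Odd n) (hp : p.Prime) (hpn : p ∣ n) (hpq : ¬ p ∣ q) :
    ∃ j : ℕ, Odd j ∧ p ∣ q ^ j + 1 := by
  classical
  haveI := Fact.mk hp₀
  haveI := Fact.mk hp
  haveI := hchar
  haveI : Fact (1 < p) := ⟨hp.one_lt⟩
  have hq0 : q ≠ 0 := by rw [hqs]; exact pow_ne_zero s hp₀.pos.ne'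
  have hq20 : q ^ 2 ≠ 0 := pow_ne_zero 2 hq0
  have hp2 : p ≠ 2 := by
    rintro rfl
    rw [Nat.odd_iff] at hn
    omega
  have hp₀p : p₀ ≠ p := by
    rintro rfl
    exact hpq (hqs ▸ dvd_pow_self p₀ hs)
  by_contra hcon
  push_neg at hcon
  -- hcon : ∀ j, Odd j → ¬ p ∣ q ^ j + 1
  -- pick a monic irreducible factor of the p-th cyclotomic polynomial
  have hcyc0 : (cyclotomic p F) ≠ 0 := cyclotomic_ne_zero p F
  have hnu : ¬ IsUnit (cyclotomic p F) := by
    intro h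
    have h1 := natDegree_eq_zero_of_isUnit h
    rw [natDegree_cyclotomic, Nat.totient_prime hp] at h1
    have := hp.two_le
    omega
  obtain ⟨g, hgirr, hgdvd⟩ := WfDvdMonoid.exists_irreducible_factor hnu hcyc0
  set f := normalize g with hfdef
  have hassoc : Associated g f := (normalize_associated g).symm
  have hfm : f.Monic := monic_normalize hgirr.ne_zero
  have hfirr : Irreducible f := hassoc.irreducible hgirr
  have hfdvdcyc : f ∣ cyclotomic p F := (normalize_associated g).dvd.trans hgdvd
  have hfdvdXp : f ∣ (X ^ p - 1 : F[X]) := hfdvdcyc.trans (cyclotomic.dvd_X_pow_sub_one p F)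
  have hfdvdXn : f ∣ (X ^ n - 1 : F[X]) := by
    obtain ⟨mm, rfl⟩ := hpn
    refine hfdvdXp.trans ?_
    have h1 := sub_dvd_pow_sub_pow ((X : F[X]) ^ p) 1 mm
    rw [one_pow, ← pow_mul] at h1
    exact h1
  obtain ⟨-, -, hself⟩ := hall f hfm hfirr hfdvdXn
  haveI := Fact.mk hfirr
  set K := AdjoinRoot f with hK
  haveI : CharP K p₀ := charP_of_injective_algebraMap (algebraMap F K).injective p₀
  set α := AdjoinRoot.root f with hα
  have hroot : aeval α f = 0 := by rw [AdjoinRoot.aeval_eq, AdjoinRoot.mk_self]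
  have hαp : α ^ p = 1 := by
    have h1 : aeval α ((X : F[X]) ^ p - 1) = 0 := by
      rw [AdjoinRoot.aeval_eq, AdjoinRoot.mk_eq_zero.mpr hfdvdXp]
    rw [map_sub, map_pow, aeval_X, map_one, sub_eq_zero] at h1
    exact h1
  have hα1 : α ≠ 1 := by
    intro h
    have h2 : aeval α (cyclotomic p F) = 0 := by
      rw [AdjoinRoot.aeval_eq, AdjoinRoot.mk_eq_zero.mpr hfdvdcyc]
    rw [cyclotomic_prime, h] at h2
    simp only [map_sum, map_pow, aeval_X, one_pow, Finset.sum_const, Finset.card_range,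
      nsmul_eq_mul, mul_one] at h2
    have h3 : p₀ ∣ p := (CharP.cast_eq_zero_iff K p₀ p).mp h2
    exact hp₀p ((Nat.prime_dvd_prime_iff_eq hp₀ hp).mp h3)
  have hordα : orderOf α = p := orderOf_eq_prime hαp hα1
  have hα0 : α ≠ 0 := by
    intro h
    rw [h, zero_pow hp.pos.ne'] at hαp
    exact zero_ne_one hαp
  set αu : Kˣ := Units.mk0 α hα0 with hαu
  have hordu : orderOf αu = p := by
    rw [← orderOf_units]
    exact hordα
  have hmodeq : ∀ {x y : ℕ}, ((x : ZMod p) = (y : ZMod p)) → α ^ x = α ^ y := by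
    intro x y h
    have h2 : αu ^ x = αu ^ y := by
      rw [pow_eq_pow_iff_modEq, hordu]
      exact (ZMod.natCast_eq_natCast_iff _ _ _).mp h
    calc α ^ x = ((αu ^ x : Kˣ) : K) := by rw [Units.val_pow_eq_pow_val]; rfl
    _ = ((αu ^ y : Kˣ) : K) := by rw [h2]
    _ = α ^ y := by rw [Units.val_pow_eq_pow_val]; rfl
  have hmodeq' : ∀ {x y : ℕ}, α ^ x = α ^ y → ((x : ZMod p) = (y : ZMod p)) := by
    intro x y h
    have h2 : αu ^ x = αu ^ y := Units.ext
      (by rw [Units.val_pow_eq_pow_val, Units.val_pow_eq_pow_val]; exact h)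
    rw [pow_eq_pow_iff_modEq, hordu] at h2
    exact (ZMod.natCast_eq_natCast_iff _ _ _).mpr h2
  set a : ZMod p := (q : ZMod p) with hadef
  have ha0 : a ≠ 0 := fun h => hpq ((ZMod.natCast_eq_zero_iff _ _).mp h)
  have hafin : IsOfFinOrder a := isOfFinOrder_iff_pow_eq_one.mpr
    ⟨p - 1, by have := hp.one_lt; omega, ZMod.pow_card_sub_one_eq_one ha0⟩
  have ha2fin : IsOfFinOrder (a ^ 2) := hafin.pow
  set m₀ := orderOf (a ^ 2) with hm₀def
  have hm₀pos : 0 < m₀ := ha2fin.orderOf_pos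
  set m := f.natDegree with hmdef
  have hm1 : 0 < m := hfirr.natDegree_pos
  -- frobenius data
  set φ : F →+* F := iterateFrobenius F p₀ s with hφdef
  have hφ : ∀ b : F, φ b = b ^ q := fun b => by rw [hφdef, iterateFrobenius_def, hqs]
  set ψ : K →+* K := iterateFrobenius K p₀ s with hψdef
  have hψ : ∀ x : K, ψ x = x ^ q := fun x => by rw [hψdef, iterateFrobenius_def, hqs]
  set ψ₂ : K →+* K := iterateFrobenius K p₀ (2 * s) with hψ₂def
  have hψ₂ : ∀ x : K, ψ₂ x = x ^ (q ^ 2) := fun x => by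
    rw [hψ₂def, iterateFrobenius_def, hqs, ← pow_mul, mul_comm s 2]
  have hfix2 : ∀ b : F, b ^ (q ^ 2) = b := fun b => by
    conv_rhs => rw [← FiniteField.pow_card b]
    rw [hF]
  -- upper bound m ≤ m₀
  set Q := (q ^ 2) ^ m₀ with hQdef
  have hQ0 : Q ≠ 0 := pow_ne_zero _ hq20
  have genfix : ∀ (w : ℕ) (b : F), b ^ ((q ^ 2) ^ w) = b := by
    intro w
    induction w with
    | zero => intro b; simp
    | succ w ih =>
      intro b
      rw [pow_succ, pow_mul, ih, hfix2]
  have hfixQF : ∀ b : F, b ^ Q = b := fun b => genfix m₀ b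
  have hαQ : α ^ Q = α := by
    have h1 : (((q ^ 2) ^ m₀ : ℕ) : ZMod p) = ((1 : ℕ) : ZMod p) := by
      push_cast
      exact pow_orderOf_eq_one (a ^ 2)
    have h2 := hmodeq h1
    simpa using h2
  set ψQ : K →+* K := iterateFrobenius K p₀ (2 * s * m₀) with hψQdef
  have hψQ : ∀ x : K, ψQ x = x ^ Q := by
    intro x
    rw [hψQdef, iterateFrobenius_def, hQdef, hqs, ← pow_mul, ← pow_mul, mul_comm 2 s, mul_assoc]
  let A : Subalgebra F K :=
    { carrier := {x : K | x ^ Q = x}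
      mul_mem' := fun {x y} hx hy => by
        simp only [Set.mem_setOf_eq] at *
        rw [mul_pow, hx, hy]
      one_mem' := one_pow Q
      add_mem' := fun {x y} hx hy => by
        simp only [Set.mem_setOf_eq] at *
        rw [← hψQ, map_add, hψQ, hψQ, hx, hy]
      zero_mem' := zero_pow hQ0
      algebraMap_mem' := fun b => by
        simp only [Set.mem_setOf_eq]
        rw [← map_pow, hfixQF] }
  have hAtop : ∀ x : K, x ^ Q = x := by
    have h1 : Algebra.adjoin F ({α} : Set K) = ⊤ := AdjoinRoot.adjoinRoot_eq_top
    have h2 : Algebra.adjoin F ({α} : Set K) ≤ A :=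
      Algebra.adjoin_le (Set.singleton_subset_iff.mpr hαQ)
    intro x
    have h3 : x ∈ Algebra.adjoin F ({α} : Set K) := h1.symm ▸ Algebra.mem_top
    exact h2 h3
  have hf0 : f ≠ 0 := hfm.ne_zero
  haveI : Module.Finite F K := Module.Finite.of_basis (AdjoinRoot.powerBasis hf0).basis
  haveI : Finite K := Module.finite_of_finite F
  haveI : Fintype K := Fintype.ofFinite K
  have hcardK : Fintype.card K = (q ^ 2) ^ m := by
    rw [Module.card_eq_pow_finrank (K := F) (V := K), hF]
    congr 1
    rw [(AdjoinRoot.powerBasis hf0).finrank]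
    rfl
  have hQ2 : 1 < Q := by
    have h1 : 2 ≤ q := by
      rw [hqs]
      calc 2 ≤ p₀ := hp₀.two_le
      _ ≤ p₀ ^ s := Nat.le_self_pow hs p₀
    have h2 : 2 ≤ q ^ 2 := le_trans h1 (Nat.le_self_pow (by norm_num) q)
    calc 1 < q ^ 2 := h2
    _ ≤ Q := Nat.le_self_pow hm₀pos.ne' _
  have hdegQ : ((X : K[X]) ^ Q - X).natDegree = Q := by
    rw [natDegree_sub_eq_left_of_natDegree_lt] <;> rw [natDegree_X_pow] <;>
      simp [natDegree_X, hQ2]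
  have hne : ((X : K[X]) ^ Q - X) ≠ 0 := by
    intro h
    rw [h] at hdegQ
    simp at hdegQ
    omega
  have hcardle : Fintype.card K ≤ Q := by
    have hsub : Finset.univ ⊆ ((X : K[X]) ^ Q - X).roots.toFinset := by
      intro x _
      rw [Multiset.mem_toFinset, mem_roots hne]
      show eval x ((X : K[X]) ^ Q - X) = 0
      rw [eval_sub, eval_pow, eval_X, hAtop x, sub_self]
    calc Fintype.card K = Finset.univ.card := (Finset.card_univ (α := K)).symm
    _ ≤ ((X : K[X]) ^ Q - X).roots.toFinset.card := Finset.card_le_card hsub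
    _ ≤ Multiset.card ((X : K[X]) ^ Q - X).roots := Multiset.toFinset_card_le _
    _ ≤ ((X : K[X]) ^ Q - X).natDegree := card_roots' _
    _ = Q := hdegQ
  have hmm₀ : m ≤ m₀ := by
    have h4 : 1 < q ^ 2 := by
      have h1 : 2 ≤ q := by
        rw [hqs]
        calc 2 ≤ p₀ := hp₀.two_le
        _ ≤ p₀ ^ s := Nat.le_self_pow hs p₀
      exact lt_of_lt_of_le h1 (Nat.le_self_pow (by norm_num) q)
    rw [hcardK, hQdef] at hcardle
    exact (Nat.pow_le_pow_iff_right h4).mp hcardle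
  -- root counting
  set S : Finset (ZMod p) := Finset.univ.filter (fun c => aeval (α ^ c.val) f = 0) with hSdef
  have hmemS : ∀ c : ZMod p, c ∈ S ↔ aeval (α ^ c.val) f = 0 := by
    intro c
    simp [hSdef]
  have hval : ∀ c : ZMod p, ((c.val : ℕ) : ZMod p) = c := fun c => by
    simp [ZMod.natCast_val, ZMod.cast_id]
  have h1S : (1 : ZMod p) ∈ S := by
    rw [hmemS, ZMod.val_one, pow_one]
    exact hroot
  have hstep1 : ∀ c ∈ S, a ^ 2 * c ∈ S := by
    intro c hc
    rw [hmemS] at hc ⊢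
    have he : α ^ ((a ^ 2 * c).val) = (α ^ c.val) ^ (q ^ 2) := by
      rw [← pow_mul]
      apply hmodeq
      rw [hval]
      push_cast
      rw [hval]
      ring
    rw [he, aeval_pow_fixed (q ^ 2) ψ₂ hψ₂ hfix2 f (α ^ c.val), hc, zero_pow hq20]
  have hstep2 : ∀ c ∈ S, (-a) * c ∈ S := by
    intro c hc
    rw [hmemS] at hc ⊢
    have hγ0 : (α ^ c.val) ≠ 0 := pow_ne_zero _ hα0
    have hd : aeval (((α ^ c.val) ^ q)⁻¹) (cdagger q f) = 0 :=
      dagger_eval q hq0 φ hφ ψ hψ f hγ0 hc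
    rw [← hself] at hd
    have he : α ^ (((-a) * c).val) = ((α ^ c.val) ^ q)⁻¹ := by
      apply eq_inv_of_mul_eq_one_left
      rw [← pow_mul, ← pow_add]
      have h0 : α ^ (0 : ℕ) = 1 := pow_zero α
      rw [← h0]
      apply hmodeq
      push_cast
      rw [hval, hval]
      ring
    rw [he]
    exact hd
  have hpow : ∀ i : ℕ, (a ^ 2) ^ i ∈ S ∧ (-a) * (a ^ 2) ^ i ∈ S := by
    intro i
    induction i with
    | zero =>
      constructor
      · simpa using h1S
      · simpa using hstep2 1 h1S
    | succ i ih =>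
      have h1 : (a ^ 2) ^ (i + 1) = a ^ 2 * (a ^ 2) ^ i := by rw [pow_succ]; ring
      refine ⟨by rw [h1]; exact hstep1 _ ih.1, ?_⟩
      exact hstep2 _ (by rw [h1]; exact hstep1 _ ih.1)
  have hnotin : ∀ i : ℕ, (a ^ 2) ^ i ≠ -a := by
    intro i hi
    set t₀ := orderOf a with ht₀def
    have ht₀pos : 0 < t₀ := hafin.orderOf_pos
    have he1 : a ^ (2 * i + (t₀ - 1)) = -1 := by
      have h1 : a ^ (2 * i) = -a := by rw [pow_mul]; exact hi
      rw [pow_add, h1, neg_mul]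
      have h2 : a * a ^ (t₀ - 1) = a ^ t₀ := by
        rw [← pow_succ']
        congr 1
        omega
      rw [h2, pow_orderOf_eq_one]
    have hdvdqj : ∀ jj : ℕ, a ^ jj = -1 → p ∣ q ^ jj + 1 := by
      intro jj hjj
      have h2 : ((q ^ jj + 1 : ℕ) : ZMod p) = 0 := by
        push_cast
        rw [hjj]
        ring
      exact (ZMod.natCast_eq_zero_iff _ _).mp h2
    rcases Nat.even_or_odd (2 * i + (t₀ - 1)) with he | ho
    · have ht₀odd : Odd t₀ := by
        rcases he with ⟨r, hr⟩
        rw [Nat.odd_iff]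
        omega
      have he2 : a ^ (2 * i + (t₀ - 1) + t₀) = -1 := by
        rw [pow_add, he1, pow_orderOf_eq_one, mul_one]
      exact hcon _ (he.add_odd ht₀odd) (hdvdqj _ he2)
    · exact hcon _ ho (hdvdqj _ he1)
  -- counting
  set A1 : Finset (ZMod p) := (Finset.range m₀).image (fun i => (a ^ 2) ^ i) with hA1def
  set B1 : Finset (ZMod p) := (Finset.range m₀).image (fun i => (-a) * (a ^ 2) ^ i) with hB1def
  have hA1S : A1 ⊆ S := by
    intro x hx
    rw [hA1def, Finset.mem_image] at hx
    obtain ⟨i, _, rfl⟩ := hx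
    exact (hpow i).1
  have hB1S : B1 ⊆ S := by
    intro x hx
    rw [hB1def, Finset.mem_image] at hx
    obtain ⟨i, _, rfl⟩ := hx
    exact (hpow i).2
  have hinj2 : Set.InjOn (fun i => (a ^ 2) ^ i) ↑(Finset.range m₀) := by
    intro i hi j hj h
    have hi' : i ∈ Set.Iio m₀ := by simpa using hi
    have hj' : j ∈ Set.Iio m₀ := by simpa using hj
    exact pow_injOn_Iio_orderOf hi' hj' h
  have hcA : A1.card = m₀ := by
    rw [hA1def, Finset.card_image_of_injOn hinj2, Finset.card_range]
  have hcB : B1.card = m₀ := by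
    rw [hB1def, Finset.card_image_of_injOn, Finset.card_range]
    intro i hi j hj h
    simp only at h
    exact hinj2 hi hj (mul_left_cancel₀ (neg_ne_zero.mpr ha0) h)
  have hdisj : Disjoint A1 B1 := by
    rw [Finset.disjoint_left]
    intro x hxA hxB
    rw [hA1def, Finset.mem_image] at hxA
    rw [hB1def, Finset.mem_image] at hxB
    obtain ⟨i, hi, rfl⟩ := hxA
    obtain ⟨i', hi', heq⟩ := hxB
    have hi'le : i' ≤ m₀ := le_of_lt (Finset.mem_range.mp hi')
    have h3 : ((a ^ 2) ^ i')⁻¹ = (a ^ 2) ^ (m₀ - i') := by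
      apply inv_eq_of_mul_eq_one_right
      rw [← pow_add, Nat.add_sub_cancel' hi'le]
      exact pow_orderOf_eq_one (a ^ 2)
    apply hnotin (i + (m₀ - i'))
    have ha2i0 : (a ^ 2) ^ i' ≠ 0 := pow_ne_zero _ (pow_ne_zero _ ha0)
    rw [pow_add, ← h3]
    field_simp
    rw [← heq]
    ring
  have hScard : 2 * m₀ ≤ S.card := by
    have hu : (A1 ∪ B1).card = 2 * m₀ := by
      rw [Finset.card_union_of_disjoint hdisj, hcA, hcB]
      ring
    calc 2 * m₀ = (A1 ∪ B1).card := hu.symm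
    _ ≤ S.card := Finset.card_le_card (Finset.union_subset hA1S hB1S)
  have hSle : S.card ≤ m := by
    have hmapne : (f.map (algebraMap F K)) ≠ 0 := (hfm.map (algebraMap F K)).ne_zero
    have hh : S.card ≤ ((f.map (algebraMap F K)).roots.toFinset).card := by
      apply Finset.card_le_card_of_injOn (fun c => α ^ c.val)
      · intro c hc
        rw [Finset.mem_coe, hmemS] at hc
        rw [Finset.mem_coe, Multiset.mem_toFinset, mem_roots hmapne]
        show eval (α ^ c.val) (f.map (algebraMap F K)) = 0
        rw [eval_map, ← aeval_def]
        exact hc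
      · intro c hc c' hc' h
        have h2 := hmodeq' h
        rw [hval, hval] at h2
        exact h2
    calc S.card ≤ ((f.map (algebraMap F K)).roots.toFinset).card := hh
    _ ≤ Multiset.card (f.map (algebraMap F K)).roots := Multiset.toFinset_card_le _
    _ ≤ (f.map (algebraMap F K)).natDegree := card_roots' _
    _ = m := natDegree_map _
  omega

theorem stmt9 {q n₁ n₂ : ℕ} (hq : IsPrimePow q)
    {F : Type*} [Field F] [Fintype F] (hF : Fintype.card F = q ^ 2)
    (hn₁ : Odd n₁) (hn₂ : Odd n₂)
    (h1q : Nat.Coprime n₁ q) (h2q : Nat.Coprime n₂ q)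
    (hall₁ : ∀ f : F[X], f.Monic → Irreducible f → f ∣ X ^ n₁ - 1 → IsSCRIM q f)
    (hall₂ : ∀ f : F[X], f.Monic → Irreducible f → f ∣ X ^ n₂ - 1 → IsSCRIM q f) :
    ∀ f : F[X], f.Monic → Irreducible f → f ∣ X ^ (n₁ * n₂) - 1 → IsSCRIM q f := by
  intro f hm hirr hdvd
  obtain ⟨p₀, s, hp₀', hs, hqs⟩ := hq
  have hp₀ : p₀.Prime := Nat.prime_iff.mpr hp₀'
  have hqs' : q = p₀ ^ s := hqs.symm
  have hchar : CharP F p₀ := by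
    obtain ⟨nn, hrprime, hcardeq⟩ := FiniteField.card F (ringChar F)
    have h1 : p₀ ∣ ringChar F ^ (nn : ℕ) := by
      rw [← hcardeq, hF, hqs', ← pow_mul]
      exact dvd_pow_self p₀ (by positivity)
    have h2 : p₀ ∣ ringChar F := hp₀.dvd_of_dvd_pow h1
    have h3 : p₀ = ringChar F := (Nat.prime_dvd_prime_iff_eq hp₀ hrprime).mp h2
    rw [h3]
    exact ringChar.charP F
  have hq2 : 2 ≤ q := by
    rw [hqs']
    calc 2 ≤ p₀ := hp₀.two_le
    _ ≤ p₀ ^ s := Nat.le_self_pow hs.ne' p₀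
  have hN : Odd (n₁ * n₂) := hn₁.mul hn₂
  have hN0 : n₁ * n₂ ≠ 0 := by
    rw [Nat.odd_iff] at hN
    omega
  have hNq : (n₁ * n₂).Coprime q := Nat.Coprime.mul h1q h2q
  have hprimes : ∀ p : ℕ, p.Prime → p ∣ n₁ * n₂ → ∃ j, Odd j ∧ p ∣ q ^ j + 1 := by
    intro p hp hpN
    have hpq : ¬ p ∣ q := by
      intro h
      have h1 : p ∣ Nat.gcd (n₁ * n₂) q := Nat.dvd_gcd hpN h
      rw [Nat.Coprime] at hNq
      rw [hNq] at h1
      exact hp.one_lt.ne' (Nat.dvd_one.mp h1)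
    rcases (Nat.Prime.dvd_mul hp).mp hpN with h | h
    · exact scrim_extract hF hp₀ hs.ne' hqs' hchar hall₁ hn₁ hp h hpq
    · exact scrim_extract hF hp₀ hs.ne' hqs' hchar hall₂ hn₂ hp h hpq
  obtain ⟨j, hjodd, hjdvd⟩ := nt_combine hq2 (n₁ * n₂) hN hNq hprimes
  exact ⟨hm, hirr, scrim_build hF hp₀ hs.ne' hqs' hchar hN0 hjodd hjdvd f hm hirr hdvd⟩
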